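/- Let E be a finite-dimensional real inner product space, x ∈ E a boundary point with outward unit normal n ∈ E, and let D > 0, k > 0, c_S⁰ > 0 and φ ∈ ℝ. Suppose c̄ : E → ℝ is differentiable at x and set c := y ↦ c_S⁰·(1 − exp(−c̄(y)/k)). Then the Robin boundary condition D·(∇c(x)·n) + φ·c(x) = φ·c_S⁰ holds if and only if the Neumann condition D·(∇c̄(x)·n) = k·φ holds; in particular, for the choice k = c_S⁰ the Robin condition is equivalent to D·(∇c̄(x)·n) = φ·c_S⁰. -/

import Mathlib

/-- For the change of variable `c := c_S⁰ (1 - exp (-c̄ / k))`, the Robin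
boundary condition `D ∇c·n + φ c = φ c_S⁰` at a boundary point `x` with
outward unit normal `n` is equivalent to the Neumann condition
`D ∇c̄·n = k φ`; in particular, for `k = c_S⁰` it is equivalent to
`D ∇c̄·n = φ c_S⁰`. -/
theorem robin_to_neumann_change_of_variable
    {E : Type*} [NormedAddCommGroup E] [InnerProductSpace ℝ E]
    [FiniteDimensional ℝ E]
    (x n : E) (hn : ‖n‖ = 1) (D k cS0 φ : ℝ)
    (hD : 0 < D) (hk : 0 < k) (hcS0 : 0 < cS0)
    (cb : E → ℝ) (hdiff : DifferentiableAt ℝ cb x)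
    (c : E → ℝ) (hc : ∀ y, c y = cS0 * (1 - Real.exp (-(cb y) / k))) :
    ((D * fderiv ℝ c x n + φ * c x = φ * cS0)
        ↔ (D * fderiv ℝ cb x n = k * φ)) ∧
    (k = cS0 →
      ((D * fderiv ℝ c x n + φ * c x = φ * cS0)
        ↔ (D * fderiv ℝ cb x n = φ * cS0))) := by
  have hk0 : (k : ℝ) ≠ 0 := hk.ne'
  set L := fderiv ℝ cb x with hL
  set e := Real.exp (-(cb x) / k) with he
  have hepos : 0 < e := Real.exp_pos _
  -- derivative of inner function
  have h1 : HasFDerivAt (fun y => -(cb y) / k) ((-k⁻¹) • L) x := by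
    have h := (hdiff.hasFDerivAt.const_mul (-k⁻¹))
    have heq : (fun y => -(cb y) / k) = (fun y => -k⁻¹ * cb y) := by
      funext y; field_simp
    rw [heq]; exact h
  have h2 : HasFDerivAt (fun y => Real.exp (-(cb y) / k)) (e • ((-k⁻¹) • L)) x :=
    h1.exp
  have h3 : HasFDerivAt (fun y => cS0 - cS0 * Real.exp (-(cb y) / k))
      (-(cS0 • (e • ((-k⁻¹) • L)))) x :=
    (h2.const_mul cS0).const_sub cS0
  have hcf : c = fun y => cS0 - cS0 * Real.exp (-(cb y) / k) := by
    funext y; rw [hc y]; ring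
  have h4 : HasFDerivAt c (-(cS0 • (e • ((-k⁻¹) • L)))) x := hcf ▸ h3
  have hval : fderiv ℝ c x n = cS0 * e * k⁻¹ * L n := by
    rw [h4.fderiv]
    simp
    ring
  set a := L n with ha
  have hcx : c x = cS0 * (1 - e) := hc x
  have hne : cS0 * e ≠ 0 := (mul_pos hcS0 hepos).ne'
  have main : (D * fderiv ℝ c x n + φ * c x = φ * cS0) ↔ (D * a = k * φ) := by
    rw [hval, hcx]
    constructor
    · intro h
      have h3 : cS0 * e * (D * a) = cS0 * e * (k * φ) := by
        field_simp at h
        linear_combination cS0 * h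
      exact mul_left_cancel₀ hne h3
    · intro h
      field_simp
      linear_combination e * h
  refine ⟨main, fun hkc => ?_⟩
  rw [main, hkc, mul_comm cS0 φ]
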